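/- Let d, k ≥ 2. For ℓ = 2, 3, …, 2k set W_ℓ = ⋃_{i+j=ℓ} A_i × A_j ⊆ F(ℝ^d,k) × F(ℝ^d,k). Then the sets W_2, …, W_{2k} are pairwise disjoint, their union is all of F(ℝ^d,k) × F(ℝ^d,k), and each W_ℓ admits a continuous section of the evaluation map e_2 : P(F(ℝ^d,k)) → F(ℝ^d,k)^2. In particular, F(ℝ^d,k)^2 can be partitioned into 2k−1 subsets, each admitting a continuous motion planning algorithm. -/

import Mathlib

open unitInterval

noncomputable section

/-- Euclidean space ℝ^d. -/
abbrev E (d : ℕ) : Type := EuclideanSpace ℝ (Fin d)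

/-- The ordered configuration space F(ℝ^d, k) of k distinct points in ℝ^d,
viewed as the subspace of (ℝ^d)^k of injective tuples. -/
def Conf (d k : ℕ) : Set (Fin k → E d) := {x | Function.Injective x}

/-- The time i/(n-1) ∈ [0,1] at which the i-th configuration is visited. -/
def eTime (n : ℕ) (i : Fin n) : unitInterval :=
  Set.projIcc 0 1 zero_le_one ((i : ℝ) / ((n : ℝ) - 1))

/-- The evaluation map e_n : P(X) → X^n,
e_n(γ) = (γ(0), γ(1/(n-1)), …, γ((n-2)/(n-1)), γ(1)). -/
def evalMap {X : Type*} [TopologicalSpace X] (n : ℕ) (γ : C(unitInterval, X)) : Fin n → X :=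
  fun i => γ (eTime n i)

/-- `A ⊆ X^n` admits a continuous section of the evaluation map e_n. -/
def HasSec {X : Type*} [TopologicalSpace X] (n : ℕ) (A : Set (Fin n → X)) : Prop :=
  ∃ s : A → C(unitInterval, X), Continuous s ∧ ∀ a : A, evalMap n (s a) = (a : Fin n → X)

/-- The projection p : ℝ^d → ℝ^d onto the first coordinate axis. -/
def projL {d : ℕ} (x : E d) : E d :=
  (WithLp.equiv 2 (Fin d → ℝ)).symm fun j => if (j : ℕ) = 0 then x j else 0

/-- cp(C) = cardinality of {p(x_1),…,p(x_k)}. -/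
def cp {d k : ℕ} (C : Fin k → E d) : ℕ := (Set.range fun i => projL (C i)).ncard

/-- The product A_{j_1} × ⋯ × A_{j_n} ⊆ F(ℝ^d,k)^n. -/
def Aprod (d k n : ℕ) (jv : Fin n → ℕ) : Set (Fin n → ↥(Conf d k)) :=
  {C | ∀ s : Fin n, cp ((C s : Fin k → E d)) = jv s}

/-- W_ℓ = ⋃_{j_1+⋯+j_n=ℓ} A_{j_1} × ⋯ × A_{j_n}, the indices j_s ranging over
{1,…,k}. -/
def Wset (d k n ℓ : ℕ) : Set (Fin n → ↥(Conf d k)) :=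
  ⋃ (jv : Fin n → ℕ) (_ : (∀ s, 1 ≤ jv s ∧ jv s ≤ k) ∧ (∑ s, jv s) = ℓ),
    Aprod d k n jv

/-! ### Auxiliary material for the proof -/

namespace S9
open Finset

variable {d k : ℕ}

/-! #### The minimal gap function -/

open Classical in
/-- The set of pairs of indices whose first coordinates differ. -/
def pairs {k : ℕ} (f : Fin k → ℝ) : Finset (Fin k × Fin k) :=
  Finset.univ.filter (fun rq => f rq.1 ≠ f rq.2)

/-- Minimal gap relative to a prescribed set of pairs. -/
def gapS {k : ℕ} (S : Finset (Fin k × Fin k)) (f : Fin k → ℝ) : ℝ :=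
  if h : S.Nonempty then S.inf' h (fun rq => |f rq.1 - f rq.2|) else 1

/-- The minimal distance between distinct values of `f` (or `1` if all values agree). -/
def gap {k : ℕ} (f : Fin k → ℝ) : ℝ := gapS (pairs f) f

lemma mem_pairs {k : ℕ} {f : Fin k → ℝ} {rq : Fin k × Fin k} :
    rq ∈ pairs f ↔ f rq.1 ≠ f rq.2 := by
  simp [pairs]

lemma gap_pos {k : ℕ} (f : Fin k → ℝ) : 0 < gap f := by
  rw [gap, gapS]
  split
  · rename_i h
    rw [Finset.lt_inf'_iff]
    intro i hi
    rw [mem_pairs] at hi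
    simpa [abs_pos, sub_ne_zero] using hi
  · norm_num

lemma gap_le {k : ℕ} {f : Fin k → ℝ} {r q : Fin k} (h : f r ≠ f q) :
    gap f ≤ |f r - f q| := by
  have hm : (r, q) ∈ pairs f := mem_pairs.2 h
  rw [gap, gapS, dif_pos ⟨_, hm⟩]
  exact Finset.inf'_le _ hm

lemma cont_inf' {ι α : Type*} [TopologicalSpace α] (s : Finset ι) (hs : s.Nonempty)
    (g : ι → α → ℝ) (hg : ∀ i, Continuous (g i)) :
    Continuous fun a => s.inf' hs fun i => g i a := by
  induction hs using Finset.Nonempty.cons_induction with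
  | singleton a => simp only [Finset.inf'_singleton]; exact hg a
  | cons a s h hs ih =>
      simp only [Finset.inf'_cons (H := hs)]
      exact (hg a).min ih

lemma continuous_gapS {k : ℕ} (S : Finset (Fin k × Fin k)) :
    Continuous fun f : Fin k → ℝ => gapS S f := by
  by_cases h : S.Nonempty
  · simp only [gapS, dif_pos h]
    exact cont_inf' S h _ (fun rq => ((continuous_apply rq.1).sub (continuous_apply rq.2)).abs)
  · simp only [gapS, dif_neg h]
    exact continuous_const

lemma key_stability {k : ℕ} {f g : Fin k → ℝ} (hclose : ∀ r, |g r - f r| < gap f / 4)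
    {r q : Fin k} (hfr : f r ≠ f q) : g r ≠ g q := by
  have h1 := gap_le hfr
  have h2 := hclose r
  have h3 := hclose q
  have htri : |f r - f q| ≤ |g r - f r| + |g r - g q| + |g q - f q| := by
    calc |f r - f q| = |(f r - g r) + (g r - g q) + (g q - f q)| := by ring_nf
      _ ≤ |f r - g r| + |g r - g q| + |g q - f q| := by
          exact le_trans (abs_add_le _ _) (by gcongr; exact abs_add_le _ _)
      _ = |g r - f r| + |g r - g q| + |g q - f q| := by rw [abs_sub_comm]
  have h0 := gap_pos f
  have : 0 < |g r - g q| := by linarith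
  exact sub_ne_zero.1 (abs_pos.1 this)

/-! #### A counting lemma -/

lemma image_card_lemma {α β γ : Type*} [Fintype α] [Nonempty α] [DecidableEq β] [DecidableEq γ]
    (f : α → β) (g : α → γ) (h : ∀ r q, f r = f q → g r = g q) :
    (Finset.image g Finset.univ).card ≤ (Finset.image f Finset.univ).card ∧
      ((Finset.image g Finset.univ).card = (Finset.image f Finset.univ).card →
        ∀ r q, g r = g q → f r = f q) := by
  classical
  set φ : β → γ := fun b => if h' : ∃ r, f r = b then g h'.choose else g (Classical.arbitrary α)
    with hφ
  have hφf : ∀ r, φ (f r) = g r := by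
    intro r
    have h' : ∃ r', f r' = f r := ⟨r, rfl⟩
    simp only [hφ, dif_pos h']
    exact h _ _ h'.choose_spec
  have himg : Finset.image g Finset.univ = Finset.image φ (Finset.image f Finset.univ) := by
    rw [Finset.image_image]
    apply Finset.image_congr
    intro r _
    exact (hφf r).symm
  constructor
  · rw [himg]; exact Finset.card_image_le
  · intro hcard r q hg
    rw [himg] at hcard
    have hinj : Set.InjOn φ ↑(Finset.image f Finset.univ) := Finset.card_image_iff.1 hcard
    have : φ (f r) = φ (f q) := by rw [hφf, hφf, hg]
    exact hinj (by simp) (by simp) this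

/-! #### `cp` via first coordinates -/

def j0 (hd : 2 ≤ d) : Fin d := ⟨0, by omega⟩
def j1 (hd : 2 ≤ d) : Fin d := ⟨1, by omega⟩

/-- The first coordinates of a configuration. -/
def fc (hd : 2 ≤ d) (C : Fin k → E d) : Fin k → ℝ := fun r => C r (j0 hd)

def ψ (hd : 2 ≤ d) (v : ℝ) : E d :=
  (WithLp.equiv 2 (Fin d → ℝ)).symm fun j => if (j : ℕ) = 0 then v else 0

lemma ψ_inj (hd : 2 ≤ d) : Function.Injective (ψ hd) := by
  intro v w h
  have := congrArg (fun y : E d => y (j0 hd)) h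
  simpa [ψ, WithLp.equiv_symm_apply, PiLp.toLp_apply, j0] using this

lemma projL_eq (hd : 2 ≤ d) (x : E d) : projL x = ψ hd (x (j0 hd)) := by
  unfold projL ψ
  congr 1
  funext j
  by_cases h : (j : ℕ) = 0
  · have hj : j = j0 hd := Fin.ext h
    rw [hj]
  · simp [h]

open Classical in
lemma cp_eq (hd : 2 ≤ d) (C : Fin k → E d) :
    cp C = (Finset.image (fc hd C) Finset.univ).card := by
  have h1 : (fun i => projL (C i)) = ψ hd ∘ fc hd C := funext fun i => projL_eq hd (C i)
  rw [cp, h1, Set.range_comp, Set.ncard_image_of_injective _ (ψ_inj hd)]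
  rw [← Set.image_univ, ← Finset.coe_univ, ← Finset.coe_image, Set.ncard_coe_finset]

lemma one_le_cp (hd : 2 ≤ d) (hk : 1 ≤ k) (C : Fin k → E d) : 1 ≤ cp C := by
  classical
  rw [cp_eq hd]
  refine Finset.card_pos.2 ?_
  have : Nonempty (Fin k) := ⟨⟨0, by omega⟩⟩
  exact (Finset.univ_nonempty).image _

lemma cp_le (hd : 2 ≤ d) (C : Fin k → E d) : cp C ≤ k := by
  classical
  rw [cp_eq hd]
  calc (Finset.image (fc hd C) Finset.univ).card ≤ Finset.univ.card := Finset.card_image_le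
    _ = k := by simp

/-! #### The explicit outbound motion -/

def clamp (x : ℝ) : ℝ := max 0 (min 1 x)

lemma clamp_nonneg (x : ℝ) : 0 ≤ clamp x := le_max_left _ _
lemma clamp_le_one (x : ℝ) : clamp x ≤ 1 := max_le zero_le_one (min_le_left _ _)
lemma clamp_cont : Continuous clamp := continuous_const.max (continuous_const.min continuous_id)
lemma clamp_of_nonpos {x : ℝ} (h : x ≤ 0) : clamp x = 0 := by
  rw [clamp, max_eq_left]; exact le_trans (min_le_right _ _) h
lemma clamp_of_one_le {x : ℝ} (h : 1 ≤ x) : clamp x = 1 := by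
  rw [clamp, min_eq_left h, max_eq_right zero_le_one]
lemma clamp_eq_one_of_pos {x : ℝ} (h : clamp (x - 1) > 0) : clamp x = 1 := by
  apply clamp_of_one_le
  by_contra hc
  push_neg at hc
  rw [clamp_of_nonpos (by linarith)] at h
  exact lt_irrefl _ h

def cc (k : ℕ) (r : Fin k) : ℝ := ((r : ℝ) + 1) / (2 * k)

lemma cc_pos (hk : 0 < k) (r : Fin k) : 0 < cc k r := by
  apply div_pos (by positivity)
  positivity

lemma cc_le_half (r : Fin k) : cc k r ≤ 1 / 2 := by
  have hk : 0 < k := r.pos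
  rw [cc, div_le_div_iff₀ (by positivity) (by norm_num)]
  have : (r : ℝ) + 1 ≤ k := by
    have := r.isLt
    exact_mod_cast Nat.succ_le_of_lt this
  linarith

lemma cc_inj (r q : Fin k) (h : cc k r = cc k q) : r = q := by
  have hk : 0 < k := r.pos
  have hk' : (0:ℝ) < k := by exact_mod_cast hk
  rw [cc, cc, div_left_inj' (by positivity)] at h
  have h' : (r : ℝ) = q := by linarith
  exact Fin.ext (by exact_mod_cast h')

lemma abs_cc_sub_lt (hk : 0 < k) (r q : Fin k) : |cc k r - cc k q| < 1 := by
  have h1 := cc_pos hk r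
  have h2 := cc_pos hk q
  have h3 := cc_le_half r
  have h4 := cc_le_half q
  rw [abs_lt]; constructor <;> linarith

/-- Outbound position at phase-time τ ∈ [0,3]: first spread the first coordinates
apart (phase τ∈[0,1]), then move the second coordinates to the values 1,…,k
(phase τ∈[1,2]), and finally move all other coordinates to 0 (phase τ∈[2,3]). -/
def Pos (hd : 2 ≤ d) (C : Fin k → E d) (δ τ : ℝ) : Fin k → E d :=
  fun r => (WithLp.equiv 2 (Fin d → ℝ)).symm fun j =>
    if (j : ℕ) = 0 then (1 - clamp (τ - 2)) * (C r (j0 hd) + clamp τ * δ * cc k r)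
    else if (j : ℕ) = 1 then (1 - clamp (τ - 1)) * C r (j1 hd) + clamp (τ - 1) * ((r : ℝ) + 1)
    else (1 - clamp (τ - 2)) * C r j

lemma Pos_apply (hd : 2 ≤ d) (C : Fin k → E d) (δ τ : ℝ) (r : Fin k) (j : Fin d) :
    Pos hd C δ τ r j =
      if (j : ℕ) = 0 then (1 - clamp (τ - 2)) * (C r (j0 hd) + clamp τ * δ * cc k r)
      else if (j : ℕ) = 1 then (1 - clamp (τ - 1)) * C r (j1 hd) + clamp (τ - 1) * ((r : ℝ) + 1)
      else (1 - clamp (τ - 2)) * C r j := by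
  rw [Pos, WithLp.equiv_symm_apply, PiLp.toLp_apply]

lemma Pos_zero (hd : 2 ≤ d) (C : Fin k → E d) (δ : ℝ) : Pos hd C δ 0 = C := by
  funext r
  have h0 : clamp (0:ℝ) = 0 := clamp_of_nonpos le_rfl
  have h1 : clamp ((0:ℝ) - 1) = 0 := clamp_of_nonpos (by norm_num)
  have h2 : clamp ((0:ℝ) - 2) = 0 := clamp_of_nonpos (by norm_num)
  have : ∀ j : Fin d, Pos hd C δ 0 r j = C r j := by
    intro j
    rw [Pos_apply, h0, h1, h2]
    by_cases hj : (j : ℕ) = 0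
    · have : j = j0 hd := Fin.ext hj
      rw [if_pos hj, this]; ring
    · by_cases hj1 : (j : ℕ) = 1
      · have : j = j1 hd := Fin.ext hj1
        rw [if_neg hj, if_pos hj1, this]; ring
      · rw [if_neg hj, if_neg hj1]; ring
  exact PiLp.ext this

lemma Pos_three (hd : 2 ≤ d) (C C' : Fin k → E d) (δ δ' : ℝ) :
    Pos hd C δ 3 = Pos hd C' δ' 3 := by
  funext r
  have h2 : clamp ((3:ℝ) - 2) = 1 := clamp_of_one_le (by norm_num)
  have h1 : clamp ((3:ℝ) - 1) = 1 := clamp_of_one_le (by norm_num)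
  have : ∀ j : Fin d, Pos hd C δ 3 r j = Pos hd C' δ' 3 r j := by
    intro j
    rw [Pos_apply, Pos_apply, h1, h2]
    split
    · ring
    · split <;> ring
  exact PiLp.ext this

lemma Pos_inj (hd : 2 ≤ d) {C : Fin k → E d} (hC : Function.Injective C) {δ : ℝ}
    (hδ : 0 < δ) (hgap : ∀ r q : Fin k, C r (j0 hd) ≠ C q (j0 hd) → δ ≤ |C r (j0 hd) - C q (j0 hd)|)
    (τ : ℝ) : Function.Injective (Pos hd C δ τ) := by
  intro r q hrq
  by_contra hne
  have hk : 0 < k := r.pos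
  have happ : ∀ j : Fin d, Pos hd C δ τ r j = Pos hd C δ τ q j :=
    fun j => congrArg (fun y : E d => y j) hrq
  have h1 := happ (j1 hd)
  rw [Pos_apply, Pos_apply] at h1
  have hj1v : ((j1 hd : Fin d) : ℕ) = 1 := rfl
  rw [if_neg (by simp [hj1v]), if_pos hj1v, if_neg (by simp [hj1v]), if_pos hj1v] at h1
  by_cases hb2 : clamp (τ - 1) = 1
  · rw [hb2] at h1
    simp only [sub_self, zero_mul, one_mul, zero_add] at h1
    have : (r : ℝ) = q := by linarith
    exact hne (Fin.ext (by exact_mod_cast this))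
  · have hb3 : clamp (τ - 2) = 0 := by
      by_contra hb3
      have : clamp (τ - 2) > 0 :=
        lt_of_le_of_ne (clamp_nonneg _) (Ne.symm hb3)
      exact hb2 (clamp_eq_one_of_pos (by simpa [show τ - 2 = (τ - 1) - 1 by ring] using this))
    have h0 := happ (j0 hd)
    rw [Pos_apply, Pos_apply] at h0
    have hj0v : ((j0 hd : Fin d) : ℕ) = 0 := rfl
    rw [if_pos hj0v, if_pos hj0v, hb3] at h0
    simp only [sub_zero, one_mul] at h0
    by_cases hft : C r (j0 hd) = C q (j0 hd)
    · rw [hft] at h0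
      have hc : clamp τ * δ * (cc k r - cc k q) = 0 := by linarith
      rcases mul_eq_zero.1 hc with hc' | hc'
      · rcases mul_eq_zero.1 hc' with hb1 | hd'
        · have hb2z : clamp (τ - 1) = 0 := by
            apply clamp_of_nonpos
            by_contra hx
            push_neg at hx
            rw [clamp_of_one_le (by linarith)] at hb1
            norm_num at hb1
          rw [hb2z] at h1
          simp only [sub_zero, one_mul, zero_mul, add_zero] at h1
          apply hne
          apply hC
          refine PiLp.ext fun j => ?_
          by_cases hj : (j : ℕ) = 0
          · rw [show j = j0 hd from Fin.ext hj]; exact hft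
          · by_cases hj1 : (j : ℕ) = 1
            · rw [show j = j1 hd from Fin.ext hj1]; exact h1
            · have hjj := happ j
              rw [Pos_apply, Pos_apply, if_neg hj, if_neg hj1, if_neg hj, if_neg hj1, hb3] at hjj
              simpa using hjj
        · exact absurd hd' (ne_of_gt hδ)
      · exact hne (cc_inj _ _ (by linarith))
    · have hg := hgap r q hft
      have : C r (j0 hd) - C q (j0 hd) = clamp τ * δ * (cc k q - cc k r) := by linarith
      have habs : |C r (j0 hd) - C q (j0 hd)| = clamp τ * δ * |cc k q - cc k r| := by
        rw [this, abs_mul, abs_of_nonneg (mul_nonneg (clamp_nonneg τ) hδ.le)]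
      have hlt : clamp τ * δ * |cc k q - cc k r| < δ := by
        have h1' := abs_cc_sub_lt hk q r
        have h2' := clamp_le_one τ
        have h3' := clamp_nonneg τ
        have habsnn : 0 ≤ |cc k q - cc k r| := abs_nonneg _
        have e0 : clamp τ * δ ≤ δ := by nlinarith
        have e1 : clamp τ * δ * |cc k q - cc k r| ≤ δ * |cc k q - cc k r| :=
          mul_le_mul_of_nonneg_right e0 habsnn
        have e2 : δ * |cc k q - cc k r| < δ := mul_lt_of_lt_one_right hδ h1'
        linarith
      rw [habs] at hg
      linarith

lemma Pos_cont (hd : 2 ≤ d) :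
    Continuous (fun w : (Fin k → E d) × ℝ × ℝ => Pos hd w.1 w.2.1 w.2.2) := by
  apply continuous_pi
  intro r
  rw [show (fun w : (Fin k → E d) × ℝ × ℝ => Pos hd w.1 w.2.1 w.2.2 r) =
    (WithLp.equiv 2 (Fin d → ℝ)).symm ∘ (fun w : (Fin k → E d) × ℝ × ℝ => fun j : Fin d =>
      if (j : ℕ) = 0 then (1 - clamp (w.2.2 - 2)) * (w.1 r (j0 hd) + clamp w.2.2 * w.2.1 * cc k r)
      else if (j : ℕ) = 1 then (1 - clamp (w.2.2 - 1)) * w.1 r (j1 hd) + clamp (w.2.2 - 1) * ((r : ℝ) + 1)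
      else (1 - clamp (w.2.2 - 2)) * w.1 r j) from rfl]
  apply Continuous.comp
  · exact PiLp.continuous_toLp 2 (fun _ : Fin d => ℝ)
  apply continuous_pi
  intro j
  have hC : ∀ j' : Fin d, Continuous fun w : (Fin k → E d) × ℝ × ℝ => w.1 r j' := by
    intro j'
    exact ((EuclideanSpace.proj j' : E d →L[ℝ] ℝ).continuous).comp
      ((continuous_apply r).comp continuous_fst)
  have hτ : Continuous fun w : (Fin k → E d) × ℝ × ℝ => w.2.2 := continuous_snd.snd
  have hδ : Continuous fun w : (Fin k → E d) × ℝ × ℝ => w.2.1 := continuous_snd.fst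
  split
  · exact ((continuous_const.sub (clamp_cont.comp (hτ.sub continuous_const))).mul
      ((hC _).add (((clamp_cont.comp hτ).mul hδ).mul continuous_const)))
  · split
    · exact ((continuous_const.sub (clamp_cont.comp (hτ.sub continuous_const))).mul (hC _)).add
        ((clamp_cont.comp (hτ.sub continuous_const)).mul continuous_const)
    · exact (continuous_const.sub (clamp_cont.comp (hτ.sub continuous_const))).mul (hC _)

/-! #### Membership in `Wset` -/

lemma Wset_sum {d k ℓ : ℕ} {x : Fin 2 → ↥(Conf d k)} (hx : x ∈ Wset d k 2 ℓ) :
    cp ((x 0 : Fin k → E d)) + cp ((x 1 : Fin k → E d)) = ℓ := by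
  simp only [Wset, Set.mem_iUnion, Aprod, Set.mem_setOf_eq] at hx
  obtain ⟨jv, ⟨hb, hs⟩, hA⟩ := hx
  rw [hA 0, hA 1, ← hs, Fin.sum_univ_two]

/-! #### The gap of the first coordinates is continuous on `Wset` -/

/-- Extraction of the first coordinates of the `s`-th configuration of a pair in `Wset`. -/
def fcs (hd : 2 ≤ d) (ℓ : ℕ) (s : Fin 2) (x : ↥(Wset d k 2 ℓ)) : Fin k → ℝ :=
  fc hd (((x : Fin 2 → ↥(Conf d k)) s : Fin k → E d))

lemma cont_fcs (hd : 2 ≤ d) (ℓ : ℕ) (s : Fin 2) : Continuous (fcs (d := d) (k := k) hd ℓ s) := by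
  apply continuous_pi
  intro r
  exact ((EuclideanSpace.proj (j0 hd) : E d →L[ℝ] ℝ).continuous).comp
    ((continuous_apply r).comp (continuous_subtype_val.comp
      ((continuous_apply s).comp continuous_subtype_val)))

lemma cont_gap_fcs (hd : 2 ≤ d) (hk : 2 ≤ k) (ℓ : ℕ) (s : Fin 2) :
    Continuous fun x : ↥(Wset d k 2 ℓ) => gap (fcs hd ℓ s x) := by
  classical
  have : Nonempty (Fin k) := ⟨⟨0, by omega⟩⟩
  rw [continuous_iff_continuousAt]
  intro x₀
  -- the neighborhood on which the pair set is constant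
  set V : Set (↥(Wset d k 2 ℓ)) :=
    {x | ∀ s' : Fin 2, ∀ r : Fin k, |fcs hd ℓ s' x r - fcs hd ℓ s' x₀ r| < gap (fcs hd ℓ s' x₀) / 4}
    with hV
  have hVopen : IsOpen V := by
    have : V = ⋂ s' : Fin 2, ⋂ r : Fin k,
        (fun x => fcs hd ℓ s' x r) ⁻¹' (Metric.ball (fcs hd ℓ s' x₀ r) (gap (fcs hd ℓ s' x₀) / 4)) := by
      ext x
      simp [hV, Real.dist_eq]
    rw [this]
    exact isOpen_iInter_of_finite fun s' => isOpen_iInter_of_finite fun r =>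
      Metric.isOpen_ball.preimage ((continuous_apply r).comp (cont_fcs hd ℓ s'))
  have hx₀V : x₀ ∈ V := by
    intro s' r
    rw [sub_self, abs_zero]
    exact div_pos (gap_pos _) (by norm_num)
  -- on V, the gap agrees with the gap relative to the fixed pair set
  have hEq : ∀ x ∈ V, ∀ s' : Fin 2,
      gap (fcs hd ℓ s' x) = gapS (pairs (fcs hd ℓ s' x₀)) (fcs hd ℓ s' x) := by
    intro x hxV
    -- first: pairs of x₀ survive in x
    have hstab : ∀ s' : Fin 2, ∀ r q : Fin k,
        fcs hd ℓ s' x₀ r ≠ fcs hd ℓ s' x₀ q → fcs hd ℓ s' x r ≠ fcs hd ℓ s' x q := by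
      intro s' r q hne
      exact key_stability (fun r => hxV s' r) hne
    -- cardinality inequalities
    have hcardle : ∀ s' : Fin 2,
        (Finset.image (fcs hd ℓ s' x₀) Finset.univ).card ≤
          (Finset.image (fcs hd ℓ s' x) Finset.univ).card := by
      intro s'
      exact (image_card_lemma (fcs hd ℓ s' x) (fcs hd ℓ s' x₀)
        (fun r q h => by by_contra hne; exact hstab s' r q hne h)).1
    have hsum : cp ((x : Fin 2 → ↥(Conf d k)) 0 : Fin k → E d) +
        cp ((x : Fin 2 → ↥(Conf d k)) 1 : Fin k → E d) = ℓ := Wset_sum x.2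
    have hsum₀ : cp ((x₀ : Fin 2 → ↥(Conf d k)) 0 : Fin k → E d) +
        cp ((x₀ : Fin 2 → ↥(Conf d k)) 1 : Fin k → E d) = ℓ := Wset_sum x₀.2
    have hcpx : ∀ s' : Fin 2, cp ((x : Fin 2 → ↥(Conf d k)) s' : Fin k → E d) =
        (Finset.image (fcs hd ℓ s' x) Finset.univ).card := fun s' => cp_eq hd _
    have hcpx₀ : ∀ s' : Fin 2, cp ((x₀ : Fin 2 → ↥(Conf d k)) s' : Fin k → E d) =
        (Finset.image (fcs hd ℓ s' x₀) Finset.univ).card := fun s' => cp_eq hd _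
    have hcardeq : ∀ s' : Fin 2,
        (Finset.image (fcs hd ℓ s' x) Finset.univ).card =
          (Finset.image (fcs hd ℓ s' x₀) Finset.univ).card := by
      have h0 := hcardle 0
      have h1 := hcardle 1
      rw [← hcpx 0, ← hcpx₀ 0] at h0
      rw [← hcpx 1, ← hcpx₀ 1] at h1
      have e0 : cp ((x : Fin 2 → ↥(Conf d k)) 0 : Fin k → E d) =
          cp ((x₀ : Fin 2 → ↥(Conf d k)) 0 : Fin k → E d) := by omega
      have e1 : cp ((x : Fin 2 → ↥(Conf d k)) 1 : Fin k → E d) =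
          cp ((x₀ : Fin 2 → ↥(Conf d k)) 1 : Fin k → E d) := by omega
      intro s'
      rcases (by omega : (s' : ℕ) = 0 ∨ (s' : ℕ) = 1) with h | h
      · have hs' : s' = 0 := Fin.ext h
        subst hs'
        rw [← hcpx 0, ← hcpx₀ 0]; exact e0
      · have hs' : s' = 1 := Fin.ext h
        subst hs'
        rw [← hcpx 1, ← hcpx₀ 1]; exact e1
    -- equal pair sets
    have hpairs : ∀ s' : Fin 2, pairs (fcs hd ℓ s' x) = pairs (fcs hd ℓ s' x₀) := by
      intro s'
      have hrev := (image_card_lemma (fcs hd ℓ s' x) (fcs hd ℓ s' x₀)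
        (fun r q h => by by_contra hne; exact hstab s' r q hne h)).2 (hcardeq s').symm
      ext rq
      rw [mem_pairs, mem_pairs]
      constructor
      · intro hne h'
        exact hne (hrev _ _ h')
      · intro hne
        exact hstab s' _ _ hne
    intro s'
    rw [gap, hpairs s']
  -- conclude by local congruence
  have hcont : ContinuousAt (fun x => gapS (pairs (fcs hd ℓ s x₀)) (fcs hd ℓ s x)) x₀ :=
    ((continuous_gapS _).comp (cont_fcs hd ℓ s)).continuousAt
  apply hcont.congr
  filter_upwards [hVopen.mem_nhds hx₀V] with x hx
  exact (hEq x hx s).symm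

end S9

/-- For d, k ≥ 2, the 2k-1 sets W_ℓ = ⋃_{i+j=ℓ} A_i × A_j,
ℓ = 2,…,2k, are pairwise disjoint, cover F(ℝ^d,k)², and each admits a
continuous section of e_2 : P(F(ℝ^d,k)) → F(ℝ^d,k)². -/
theorem stmt9 (d k : ℕ) (hd : 2 ≤ d) (hk : 2 ≤ k) :
    (∀ ℓ ∈ Set.Icc 2 (2 * k), ∀ ℓ' ∈ Set.Icc 2 (2 * k), ℓ ≠ ℓ' →
      Disjoint (Wset d k 2 ℓ) (Wset d k 2 ℓ')) ∧
    (⋃ ℓ ∈ Set.Icc 2 (2 * k), Wset d k 2 ℓ) = Set.univ ∧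
    (∀ ℓ ∈ Set.Icc 2 (2 * k), HasSec 2 (Wset d k 2 ℓ)) := by
  classical
  refine ⟨?_, ?_, ?_⟩
  · -- disjointness
    intro ℓ _ ℓ' _ hne
    rw [Set.disjoint_left]
    intro x hx hx'
    exact hne ((S9.Wset_sum hx).symm.trans (S9.Wset_sum hx'))
  · -- covering
    ext x
    simp only [Set.mem_iUnion, Set.mem_univ, iff_true]
    refine ⟨cp ((x 0 : Fin k → E d)) + cp ((x 1 : Fin k → E d)), ?_, ?_⟩
    · constructor
      · have := S9.one_le_cp hd (by omega) ((x 0 : Fin k → E d))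
        have := S9.one_le_cp hd (by omega) ((x 1 : Fin k → E d))
        omega
      · have := S9.cp_le hd ((x 0 : Fin k → E d))
        have := S9.cp_le hd ((x 1 : Fin k → E d))
        omega
    · simp only [Wset, Set.mem_iUnion]
      refine ⟨fun s => cp ((x s : Fin k → E d)), ⟨⟨fun s => ?_, ?_⟩, fun s => rfl⟩⟩
      · exact ⟨S9.one_le_cp hd (by omega) _, S9.cp_le hd _⟩
      · rw [Fin.sum_univ_two]
  · -- sections
    intro ℓ _
    -- the ambient path map
    set pAmb : ↥(Wset d k 2 ℓ) × unitInterval → (Fin k → E d) := fun q =>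
      if ((q.2 : ℝ)) ≤ 1/2 then
        S9.Pos hd (((q.1 : Fin 2 → ↥(Conf d k)) 0 : Fin k → E d))
          (S9.gap (S9.fcs hd ℓ 0 q.1)) (6 * (q.2 : ℝ))
      else
        S9.Pos hd (((q.1 : Fin 2 → ↥(Conf d k)) 1 : Fin k → E d))
          (S9.gap (S9.fcs hd ℓ 1 q.1)) (6 - 6 * (q.2 : ℝ))
      with hpAmb
    have hmem : ∀ q, pAmb q ∈ Conf d k := by
      intro q
      rw [hpAmb]
      dsimp only
      split
      · exact S9.Pos_inj hd ((q.1 : Fin 2 → ↥(Conf d k)) 0).2 (S9.gap_pos _)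
          (fun r q' h => S9.gap_le h) _
      · exact S9.Pos_inj hd ((q.1 : Fin 2 → ↥(Conf d k)) 1).2 (S9.gap_pos _)
          (fun r q' h => S9.gap_le h) _
    have hXs : ∀ s : Fin 2, Continuous fun q : ↥(Wset d k 2 ℓ) × unitInterval =>
        (((q.1 : Fin 2 → ↥(Conf d k)) s : Fin k → E d)) :=
      fun s => continuous_subtype_val.comp ((continuous_apply s).comp
        (continuous_subtype_val.comp continuous_fst))
    have hGs : ∀ s : Fin 2, Continuous fun q : ↥(Wset d k 2 ℓ) × unitInterval =>
        S9.gap (S9.fcs hd ℓ s q.1) :=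
      fun s => (S9.cont_gap_fcs hd hk ℓ s).comp continuous_fst
    have htc : Continuous fun q : ↥(Wset d k 2 ℓ) × unitInterval => ((q.2 : ℝ)) :=
      continuous_subtype_val.comp continuous_snd
    have hcont : Continuous pAmb := by
      rw [hpAmb]
      apply Continuous.if_le
      · exact (S9.Pos_cont hd).comp
          ((hXs 0).prodMk ((hGs 0).prodMk (continuous_const.mul htc)))
      · exact (S9.Pos_cont hd).comp
          ((hXs 1).prodMk ((hGs 1).prodMk (continuous_const.sub (continuous_const.mul htc))))
      · exact htc
      · exact continuous_const
      · intro q hq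
        rw [hq]
        norm_num
        exact S9.Pos_three hd _ _ _ _
    set F : C(↥(Wset d k 2 ℓ) × unitInterval, ↥(Conf d k)) :=
      ⟨fun q => ⟨pAmb q, hmem q⟩, hcont.subtype_mk _⟩ with hF
    refine ⟨fun a => F.curry a, F.curry.continuous, ?_⟩
    intro a
    funext i
    show (F.curry a) (eTime 2 i) = (a : Fin 2 → ↥(Conf d k)) i
    rw [ContinuousMap.curry_apply]
    rcases (by omega : (i : ℕ) = 0 ∨ (i : ℕ) = 1) with h | h
    · have hi : i = 0 := Fin.ext h
      subst hi
      have ht : ((eTime 2 0 : unitInterval) : ℝ) = 0 := by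
        simp [eTime, Set.projIcc]
      apply Subtype.ext
      show pAmb (a, eTime 2 0) = _
      rw [hpAmb]
      dsimp only
      rw [ht, if_pos (by norm_num : (0:ℝ) ≤ 1/2), mul_zero, S9.Pos_zero]
    · have hi : i = 1 := Fin.ext h
      subst hi
      have ht : ((eTime 2 1 : unitInterval) : ℝ) = 1 := by
        simp [eTime, Set.projIcc]
        norm_num
      apply Subtype.ext
      show pAmb (a, eTime 2 1) = _
      rw [hpAmb]
      dsimp only
      rw [ht, if_neg (by norm_num : ¬((1:ℝ) ≤ 1/2))]
      norm_num [S9.Pos_zero]
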